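/- For every collection A of k binary sequences in {0,1}^ℓ there exists a collection A' of k sequences in ℤ^{ℓ'} with ℓ' ≤ 2^k such that OPT(A') = OPT(A). -/

import Mathlib

/-- Manhattan distance between two integer sequences with coordinates indexed by `ι`. -/
def manhattanDist {ι : Type} [Fintype ι] (x y : ι → ℤ) : ℤ := ∑ j, |x j - y j|

/-- Manhattan distance from a sequence to a collection of `k` sequences. -/
def manhattanDistA {k : ℕ} {ι : Type} [Fintype ι] (hk : 0 < k) (a : Fin k → ι → ℤ)
    (x : ι → ℤ) : ℤ :=
  Finset.univ.sup' ⟨⟨0, hk⟩, Finset.mem_univ _⟩ fun i => manhattanDist x (a i)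

/-- `OPT(A)`: the optimal (minimal) distance to the collection. -/
noncomputable def manhattanOPT {k : ℕ} {ι : Type} [Fintype ι] (hk : 0 < k)
    (a : Fin k → ι → ℤ) : ℤ :=
  sInf {d : ℤ | ∃ x : ι → ℤ, manhattanDistA hk a x = d}

lemma manhattanDist_nonneg {ι : Type} [Fintype ι] (x y : ι → ℤ) :
    0 ≤ manhattanDist x y :=
  Finset.sum_nonneg fun _ _ => abs_nonneg _

lemma manhattanDistA_nonneg {k : ℕ} {ι : Type} [Fintype ι] (hk : 0 < k)
    (a : Fin k → ι → ℤ) (x : ι → ℤ) : 0 ≤ manhattanDistA hk a x := by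
  unfold manhattanDistA
  have h := Finset.le_sup' (fun i => manhattanDist x (a i)) (Finset.mem_univ (⟨0, hk⟩ : Fin k))
  exact le_trans (manhattanDist_nonneg x (a ⟨0, hk⟩)) h

lemma manhattanOPT_set_nonempty {k : ℕ} {ι : Type} [Fintype ι] (hk : 0 < k)
    (a : Fin k → ι → ℤ) :
    {d : ℤ | ∃ x : ι → ℤ, manhattanDistA hk a x = d}.Nonempty :=
  ⟨_, fun _ => 0, rfl⟩

lemma manhattanOPT_set_bddBelow {k : ℕ} {ι : Type} [Fintype ι] (hk : 0 < k)
    (a : Fin k → ι → ℤ) :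
    BddBelow {d : ℤ | ∃ x : ι → ℤ, manhattanDistA hk a x = d} := by
  refine ⟨0, fun d hd => ?_⟩
  obtain ⟨x, rfl⟩ := hd
  exact manhattanDistA_nonneg hk a x

/-- If every point for `a` can be dominated by a point for `a'`, the optimum decreases. -/
lemma manhattanOPT_le {k : ℕ} {ι ι' : Type} [Fintype ι] [Fintype ι'] (hk : 0 < k)
    (a : Fin k → ι → ℤ) (a' : Fin k → ι' → ℤ)
    (h : ∀ x : ι → ℤ, ∃ y : ι' → ℤ, manhattanDistA hk a' y ≤ manhattanDistA hk a x) :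
    manhattanOPT hk a' ≤ manhattanOPT hk a := by
  refine le_csInf (manhattanOPT_set_nonempty hk a) ?_
  rintro d ⟨x, rfl⟩
  obtain ⟨y, hy⟩ := h x
  exact le_trans (csInf_le (manhattanOPT_set_bddBelow hk a') ⟨y, rfl⟩) hy

/-- The optimum is invariant under reindexing of coordinates. -/
lemma manhattanOPT_reindex {k : ℕ} {ι ι' : Type} [Fintype ι] [Fintype ι'] (hk : 0 < k)
    (e : ι ≃ ι') (a : Fin k → ι' → ℤ) :
    manhattanOPT hk (fun i => a i ∘ e) = manhattanOPT hk a := by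
  have key : ∀ x : ι → ℤ, manhattanDistA hk (fun i => a i ∘ e) x
      = manhattanDistA hk a (x ∘ e.symm) := by
    intro x
    unfold manhattanDistA
    apply Finset.sup'_congr _ rfl
    intro i _
    unfold manhattanDist
    exact Fintype.sum_equiv e _ _ (fun j => by simp)
  unfold manhattanOPT
  congr 1
  ext d
  constructor
  · rintro ⟨x, rfl⟩
    exact ⟨x ∘ e.symm, (key x).symm⟩
  · rintro ⟨x, rfl⟩
    refine ⟨x ∘ e, ?_⟩
    rw [key]
    congr 1
    ext j
    simp

/-- Sum of absolute values equals absolute value of the sum when all values lie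
in `{c, c+1}` for some integer `c`. -/
lemma abs_sum_two {α : Type*} (s : Finset α) (f : α → ℤ) (c : ℤ)
    (h : ∀ j ∈ s, f j = c ∨ f j = c + 1) :
    ∑ j ∈ s, |f j| = |∑ j ∈ s, f j| := by
  rcases le_or_gt 0 c with hc | hc
  · have h1 : ∀ j ∈ s, 0 ≤ f j := by
      intro j hj; rcases h j hj with h' | h' <;> omega
    rw [abs_of_nonneg (Finset.sum_nonneg h1)]
    exact Finset.sum_congr rfl fun j hj => abs_of_nonneg (h1 j hj)
  · have h1 : ∀ j ∈ s, f j ≤ 0 := by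
      intro j hj; rcases h j hj with h' | h' <;> omega
    rw [abs_of_nonpos (Finset.sum_nonpos h1), ← Finset.sum_neg_distrib]
    exact Finset.sum_congr rfl fun j hj => abs_of_nonpos (h1 j hj)

/-- every collection of `k` binary sequences has an equivalent
collection (same Manhattan consensus optimum) of `k` integer sequences of length
at most `2^k`. -/
theorem stmt7 {ℓ k : ℕ} (hk : 0 < k) (a : Fin k → Fin ℓ → ℤ)
    (hbin : ∀ i j, a i j = 0 ∨ a i j = 1) :
    ∃ ℓ' : ℕ, ℓ' ≤ 2 ^ k ∧
      ∃ a' : Fin k → Fin ℓ' → ℤ, manhattanOPT hk a' = manhattanOPT hk a := by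
  classical
  refine ⟨2 ^ k, le_refl _, ?_⟩
  -- patterns of columns
  set ι' := (Fin k → Bool) with hι'
  have hcard : Fintype.card ι' = 2 ^ k := by simp [hι']
  let e : ι' ≃ Fin (2 ^ k) := Fintype.equivFinOfCardEq hcard
  let pat : Fin ℓ → ι' := fun j i => decide (a i j = 1)
  let fiber : ι' → Finset (Fin ℓ) := fun p => Finset.univ.filter (fun j => pat j = p)
  let m : ι' → ℤ := fun p => ((fiber p).card : ℤ)
  let b : ι' → Fin k → ℤ := fun p i => if p i then 1 else 0
  let a'' : Fin k → ι' → ℤ := fun i p => m p * b p i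
  refine ⟨fun i => a'' i ∘ e.symm, ?_⟩
  rw [manhattanOPT_reindex hk e.symm a'']
  -- basic facts
  have hab : ∀ i j, a i j = b (pat j) i := by
    intro i j
    rcases hbin i j with h | h <;> simp [pat, b, h]
  have hfibsum : ∀ (p : ι') (i : Fin k), ∑ j ∈ fiber p, a i j = m p * b p i := by
    intro p i
    have : ∀ j ∈ fiber p, a i j = b p i := by
      intro j hj
      rw [hab i j]
      congr 1
      exact (Finset.mem_filter.mp hj).2
    rw [Finset.sum_congr rfl this, Finset.sum_const, nsmul_eq_mul]
  have hsplit : ∀ f : Fin ℓ → ℤ, ∑ p : ι', ∑ j ∈ fiber p, f j = ∑ j, f j := by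
    intro f
    exact Finset.sum_fiberwise Finset.univ pat f
  apply le_antisymm
  · -- OPT a'' ≤ OPT a
    apply manhattanOPT_le
    intro x
    refine ⟨fun p => ∑ j ∈ fiber p, x j, ?_⟩
    apply Finset.sup'_le
    intro i _
    refine le_trans ?_ (Finset.le_sup' _ (Finset.mem_univ i))
    unfold manhattanDist
    rw [← hsplit (fun j => |x j - a i j|)]
    apply Finset.sum_le_sum
    intro p _
    have : (∑ j ∈ fiber p, x j) - a'' i p = ∑ j ∈ fiber p, (x j - a i j) := by
      rw [Finset.sum_sub_distrib, hfibsum p i]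
    rw [this]
    exact Finset.abs_sum_le_sum_abs _ _
  · -- OPT a ≤ OPT a''
    apply manhattanOPT_le
    intro y
    -- quotient and remainder for each pattern
    let q : ι' → ℤ := fun p => y p / m p
    let r : ι' → ℕ := fun p => (y p % m p).toNat
    have hS : ∀ p : ι', ∃ S ⊆ fiber p, S.card = min (r p) (fiber p).card :=
      fun p => Finset.exists_subset_card_eq (min_le_right _ _)
    choose S hSsub hScard using hS
    let x : Fin ℓ → ℤ := fun j => q (pat j) + (if j ∈ S (pat j) then 1 else 0)
    refine ⟨x, ?_⟩
    apply Finset.sup'_le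
    intro i _
    refine le_trans ?_ (Finset.le_sup' _ (Finset.mem_univ i))
    unfold manhattanDist
    rw [← hsplit (fun j => |x j - a i j|)]
    apply Finset.sum_le_sum
    intro p _
    -- inner sum over the fiber of p
    have hmem : ∀ j ∈ fiber p, pat j = p := fun j hj => (Finset.mem_filter.mp hj).2
    have hval : ∀ j ∈ fiber p, x j - a i j = (q p - b p i) + (if j ∈ S p then 1 else 0) := by
      intro j hj
      rw [hab i j, hmem j hj]
      simp only [x, hmem j hj]
      ring
    have habs : ∑ j ∈ fiber p, |x j - a i j| = |∑ j ∈ fiber p, (x j - a i j)| := by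
      apply abs_sum_two _ _ (q p - b p i)
      intro j hj
      rw [hval j hj]
      by_cases h : j ∈ S p <;> simp [h]
    rw [habs]
    rcases Finset.eq_empty_or_nonempty (fiber p) with hemp | hne
    · rw [hemp]
      simp [abs_nonneg]
    · -- nonempty fiber: the sum equals y p - a'' i p exactly
      have hmpos : 0 < m p := by
        simp only [m]
        exact_mod_cast Finset.card_pos.mpr hne
      have hr : (r p : ℤ) = y p % m p := Int.toNat_of_nonneg (Int.emod_nonneg _ (ne_of_gt hmpos))
      have hrlt : (r p : ℤ) < m p := by rw [hr]; exact Int.emod_lt_of_pos _ hmpos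
      have hrcard : min (r p) (fiber p).card = r p := by
        apply min_eq_left
        have : (r p : ℤ) < ((fiber p).card : ℤ) := hrlt
        exact_mod_cast le_of_lt this
      have hsum : ∑ j ∈ fiber p, (x j - a i j) = y p - a'' i p := by
        rw [Finset.sum_congr rfl hval, Finset.sum_add_distrib, Finset.sum_const,
          nsmul_eq_mul]
        have hite : ∑ j ∈ fiber p, (if j ∈ S p then (1 : ℤ) else 0) = (S p).card := by
          rw [Finset.sum_ite_mem]
          rw [Finset.inter_eq_right.mpr (hSsub p)]
          simp
        rw [hite, hScard p, hrcard, hr]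
        have hm : ((fiber p).card : ℤ) = m p := rfl
        have hq : q p = y p / m p := rfl
        have hb : a'' i p = m p * b p i := rfl
        rw [hm, hb, hq]
        linear_combination Int.mul_ediv_add_emod (y p) (m p)
      rw [hsum]
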